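/- Suppose l is an index with 0 < λ_l < 1. Then the subspace S_l := span{ |0⟩⊗φ_l , Ũ*(|0⟩⊗ψ_l) } of ℂ² ⊗ ℂⁿ is two-dimensional, is invariant under the echo operator C, and the restriction of C to S_l is unitary with eigenvalues e^{iθ_l} and e^{−iθ_l}, where λ_l = cos(θ_l/2). (Qubitization: C acts on each nondegenerate singular-value sector as a rotation by angle θ_l.) -/

import Mathlib

open Matrix Finset

/-- **Qubitization of the echo operator.** If `0 < λ_l < 1`, the subspace
`S_l = span{|0⟩⊗φ_l, Ũ*(|0⟩⊗ψ_l)}` is two-dimensional, invariant under the echo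
operator `C`, and the restriction of `C` to `S_l` is unitary with eigenvalues
`e^{iθ_l}` and `e^{−iθ_l}`, where `λ_l = cos(θ_l/2)`. -/
theorem echo_qubitization
    (n : ℕ) (hn : 1 ≤ n)
    (Ut : Matrix (Fin 2 × Fin n) (Fin 2 × Fin n) ℂ)
    (hUt : Ut ∈ Matrix.unitaryGroup (Fin 2 × Fin n) ℂ)
    (A : Matrix (Fin n) (Fin n) ℂ)
    (hA : ∀ a b : Fin n, A a b = Ut (0, a) (0, b))
    (ZI : Matrix (Fin 2 × Fin n) (Fin 2 × Fin n) ℂ)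
    (hZI : ∀ p q : Fin 2 × Fin n,
      ZI p q = if p = q then (if p.1 = 0 then 1 else -1) else 0)
    (C : Matrix (Fin 2 × Fin n) (Fin 2 × Fin n) ℂ)
    (hC : C = Utᴴ * ZI * Ut * ZI)
    -- singular value decomposition of `A`
    (ψb φb : Fin n → (Fin n → ℂ))
    (hψb : ∀ l l' : Fin n, star (ψb l) ⬝ᵥ ψb l' = if l = l' then 1 else 0)
    (hφb : ∀ l l' : Fin n, star (φb l) ⬝ᵥ φb l' = if l = l' then 1 else 0)
    (lam θ : Fin n → ℝ)
    (hAφ : ∀ l : Fin n, A *ᵥ φb l = (lam l : ℂ) • ψb l)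
    (hAψ : ∀ l : Fin n, Aᴴ *ᵥ ψb l = (lam l : ℂ) • φb l)
    (hlam : ∀ l : Fin n, lam l ∈ Set.Icc (0 : ℝ) 1)
    (hθ : ∀ l : Fin n, θ l ∈ Set.Icc (0 : ℝ) Real.pi)
    (hlamθ : ∀ l : Fin n, lam l = Real.cos (θ l / 2))
    -- a nondegenerate singular-value index
    (l : Fin n) (hl0 : 0 < lam l) (hl1 : lam l < 1)
    -- the two spanning vectors and the subspace `S_l`
    (v₁ v₂ : Fin 2 × Fin n → ℂ)
    (hv₁ : ∀ p : Fin 2 × Fin n, v₁ p = if p.1 = 0 then φb l p.2 else 0)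
    (hv₂ : v₂ = Utᴴ *ᵥ (fun p : Fin 2 × Fin n => if p.1 = 0 then ψb l p.2 else 0))
    (S : Submodule ℂ (Fin 2 × Fin n → ℂ))
    (hS : S = Submodule.span ℂ {v₁, v₂}) :
    Module.finrank ℂ S = 2 ∧
    (∀ x ∈ S, C *ᵥ x ∈ S) ∧
    (∀ x ∈ S, ∀ y ∈ S, star (C *ᵥ x) ⬝ᵥ (C *ᵥ y) = star x ⬝ᵥ y) ∧
    (∃ w ∈ S, w ≠ 0 ∧ C *ᵥ w = Complex.exp ((θ l : ℂ) * Complex.I) • w) ∧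
    (∃ w ∈ S, w ≠ 0 ∧ C *ᵥ w = Complex.exp (-(θ l : ℂ) * Complex.I) • w) := by
  -- basic abbreviations
  set cc : ℂ := ((lam l : ℝ) : ℂ) with hccdef
  set u₂ : Fin 2 × Fin n → ℂ := fun p => if p.1 = 0 then ψb l p.2 else 0 with hu₂def
  have hv₂' : v₂ = Utᴴ *ᵥ u₂ := by rw [hv₂, hu₂def]
  -- unitarity of Ut
  have hU1 : Utᴴ * Ut = 1 := by
    have h := hUt.1; rwa [Matrix.star_eq_conjTranspose] at h
  have hU2 : Ut * Utᴴ = 1 := by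
    have h := hUt.2; rwa [Matrix.star_eq_conjTranspose] at h
  have hUtU : ∀ x : Fin 2 × Fin n → ℂ, Utᴴ *ᵥ (Ut *ᵥ x) = x := fun x => by
    rw [Matrix.mulVec_mulVec, hU1, Matrix.one_mulVec]
  have hUUt : ∀ x : Fin 2 × Fin n → ℂ, Ut *ᵥ (Utᴴ *ᵥ x) = x := fun x => by
    rw [Matrix.mulVec_mulVec, hU2, Matrix.one_mulVec]
  -- ZI as a diagonal matrix
  have hZId : ZI = Matrix.diagonal (fun p : Fin 2 × Fin n => if p.1 = 0 then (1:ℂ) else -1) := by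
    ext p q
    rw [hZI]
    rcases eq_or_ne p q with rfl | hpq
    · simp [Matrix.diagonal_apply_eq]
    · simp [Matrix.diagonal_apply_ne _ hpq, hpq]
  have hZIv : ∀ (x : Fin 2 × Fin n → ℂ) (p : Fin 2 × Fin n),
      (ZI *ᵥ x) p = if p.1 = 0 then x p else - x p := by
    intro x p
    rw [hZId, Matrix.mulVec_diagonal]
    split_ifs <;> ring
  -- sums over the product index
  have hsum : ∀ g : Fin 2 × Fin n → ℂ,
      ∑ p : Fin 2 × Fin n, g p = (∑ b, g (0, b)) + (∑ b, g (1, b)) := by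
    intro g
    rw [Fintype.sum_prod_type, Fin.sum_univ_two]
  have hdot : ∀ x y : Fin 2 × Fin n → ℂ,
      star x ⬝ᵥ y = (∑ b, star (x (0, b)) * y (0, b)) + ∑ b, star (x (1, b)) * y (1, b) := by
    intro x y
    rw [show star x ⬝ᵥ y = ∑ p : Fin 2 × Fin n, star (x p) * y p from rfl, hsum]
  -- the top block of Ut *ᵥ v₁
  have htop1 : ∀ a : Fin n, (Ut *ᵥ v₁) (0, a) = cc * ψb l a := by
    intro a
    rw [show (Ut *ᵥ v₁) (0, a) = ∑ q : Fin 2 × Fin n, Ut (0, a) q * v₁ q from rfl, hsum]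
    have h1 : ∑ b, Ut (0, a) (1, b) * v₁ (1, b) = 0 := by
      apply Finset.sum_eq_zero; intro b _; rw [hv₁]; simp
    have h0 : ∑ b, Ut (0, a) (0, b) * v₁ (0, b) = (A *ᵥ φb l) a := by
      rw [show (A *ᵥ φb l) a = ∑ b, A a b * φb l b from rfl]
      apply Finset.sum_congr rfl
      intro b _
      rw [hA, hv₁]
      simp
    rw [h0, h1, add_zero, hAφ]
    simp [hccdef]
  -- the top block of v₂
  have htop2 : ∀ a : Fin n, v₂ (0, a) = cc * φb l a := by
    intro a
    rw [hv₂']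
    rw [show (Utᴴ *ᵥ u₂) (0, a) = ∑ q : Fin 2 × Fin n, Utᴴ (0, a) q * u₂ q from rfl, hsum]
    have h1 : ∑ b, Utᴴ (0, a) (1, b) * u₂ (1, b) = 0 := by
      apply Finset.sum_eq_zero; intro b _; simp [hu₂def]
    have h0 : ∑ b, Utᴴ (0, a) (0, b) * u₂ (0, b) = (Aᴴ *ᵥ ψb l) a := by
      rw [show (Aᴴ *ᵥ ψb l) a = ∑ b, Aᴴ a b * ψb l b from rfl]
      apply Finset.sum_congr rfl
      intro b _
      rw [Matrix.conjTranspose_apply, Matrix.conjTranspose_apply, hA, hu₂def]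
      simp
    rw [h0, h1, add_zero, hAψ]
    simp [hccdef]
  -- ZI fixes vectors supported on the 0 block
  have hZv₁ : ZI *ᵥ v₁ = v₁ := by
    funext p
    rw [hZIv]
    split_ifs with h
    · rfl
    · rw [hv₁]; simp [h]
  have hZu₂ : ZI *ᵥ u₂ = u₂ := by
    funext p
    rw [hZIv]
    split_ifs with h
    · rfl
    · simp [hu₂def, h]
  -- reflection identities
  have hstep2 : ZI *ᵥ (Ut *ᵥ v₁) = (2 * cc) • u₂ - Ut *ᵥ v₁ := by
    funext p
    obtain ⟨i, a⟩ := p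
    rw [hZIv]
    by_cases h : i = 0
    · subst h
      rw [if_pos rfl]
      simp only [Pi.sub_apply, Pi.smul_apply, smul_eq_mul, htop1, hu₂def]
      simp
      ring
    · rw [if_neg h]
      simp only [Pi.sub_apply, Pi.smul_apply, smul_eq_mul, hu₂def]
      simp [h]
  have hstep3 : ZI *ᵥ v₂ = (2 * cc) • v₁ - v₂ := by
    funext p
    obtain ⟨i, a⟩ := p
    rw [hZIv]
    by_cases h : i = 0
    · subst h
      rw [if_pos rfl]
      simp only [Pi.sub_apply, Pi.smul_apply, smul_eq_mul, htop2, hv₁]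
      simp
      ring
    · rw [if_neg h]
      simp only [Pi.sub_apply, Pi.smul_apply, smul_eq_mul, hv₁]
      simp [h]
  -- decomposition of C acting on vectors
  have hCx : ∀ x : Fin 2 × Fin n → ℂ, C *ᵥ x = Utᴴ *ᵥ (ZI *ᵥ (Ut *ᵥ (ZI *ᵥ x))) := by
    intro x
    rw [hC, ← Matrix.mulVec_mulVec, ← Matrix.mulVec_mulVec, ← Matrix.mulVec_mulVec]
  -- action of C on the two spanning vectors
  have hCv₁ : C *ᵥ v₁ = (2 * cc) • v₂ - v₁ := by
    rw [hCx, hZv₁, hstep2, Matrix.mulVec_sub, Matrix.mulVec_smul, hUtU, hv₂']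
  have hCv₂ : C *ᵥ v₂ = (4 * cc ^ 2 - 1) • v₂ - (2 * cc) • v₁ := by
    have hUv₂ : Ut *ᵥ v₂ = u₂ := by rw [hv₂', hUUt]
    rw [hCx, hstep3, Matrix.mulVec_sub, Matrix.mulVec_smul, hUv₂]
    have hrw : (2 * cc) • (Ut *ᵥ v₁) - u₂ = (2 * cc) • (Ut *ᵥ v₁) - u₂ := rfl
    have hZ2 : ZI *ᵥ ((2 * cc) • (Ut *ᵥ v₁) - u₂)
        = (4 * cc ^ 2 - 1) • u₂ - (2 * cc) • (Ut *ᵥ v₁) := by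
      rw [Matrix.mulVec_sub, Matrix.mulVec_smul, hstep2, hZu₂]
      module
    rw [hZ2, Matrix.mulVec_sub, Matrix.mulVec_smul, Matrix.mulVec_smul, hUtU, ← hv₂']
  -- Gram matrix entries
  have hφ1 : ∑ b, star (φb l b) * φb l b = 1 := by
    simpa [dotProduct] using hφb l l
  have hψ1 : ∑ b, star (ψb l b) * ψb l b = 1 := by
    simpa [dotProduct] using hψb l l
  have g11 : star v₁ ⬝ᵥ v₁ = 1 := by
    rw [hdot]
    have h1 : ∑ b, star (v₁ (1, b)) * v₁ (1, b) = 0 := by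
      apply Finset.sum_eq_zero; intro b _; rw [hv₁]; simp
    have h0 : ∑ b, star (v₁ (0, b)) * v₁ (0, b) = ∑ b, star (φb l b) * φb l b := by
      apply Finset.sum_congr rfl; intro b _; rw [hv₁]; simp
    rw [h0, h1, add_zero, hφ1]
  have hu₂u₂ : star u₂ ⬝ᵥ u₂ = 1 := by
    rw [hdot]
    have h1 : ∑ b, star (u₂ (1, b)) * u₂ (1, b) = 0 := by
      apply Finset.sum_eq_zero; intro b _; simp [hu₂def]
    have h0 : ∑ b, star (u₂ (0, b)) * u₂ (0, b) = ∑ b, star (ψb l b) * ψb l b := by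
      apply Finset.sum_congr rfl; intro b _; simp [hu₂def]
    rw [h0, h1, add_zero, hψ1]
  have hpres : ∀ x y : Fin 2 × Fin n → ℂ,
      star (Utᴴ *ᵥ x) ⬝ᵥ (Utᴴ *ᵥ y) = star x ⬝ᵥ y := by
    intro x y
    rw [Matrix.star_mulVec, Matrix.conjTranspose_conjTranspose, Matrix.dotProduct_mulVec,
      Matrix.vecMul_vecMul, hU2, Matrix.vecMul_one]
  have g22 : star v₂ ⬝ᵥ v₂ = 1 := by rw [hv₂', hpres, hu₂u₂]
  have hstarcc : star cc = cc := by
    rw [hccdef]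
    exact Complex.conj_ofReal _
  have g12 : star v₁ ⬝ᵥ v₂ = cc := by
    rw [hdot]
    have h1 : ∑ b, star (v₁ (1, b)) * v₂ (1, b) = 0 := by
      apply Finset.sum_eq_zero; intro b _; rw [hv₁]; simp
    have h0 : ∑ b, star (v₁ (0, b)) * v₂ (0, b) = cc * ∑ b, star (φb l b) * φb l b := by
      rw [Finset.mul_sum]
      apply Finset.sum_congr rfl; intro b _
      rw [hv₁, htop2]
      simp
      ring
    rw [h0, h1, add_zero, hφ1, mul_one]
  have g21 : star v₂ ⬝ᵥ v₁ = cc := by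
    rw [hdot]
    have h1 : ∑ b, star (v₂ (1, b)) * v₁ (1, b) = 0 := by
      apply Finset.sum_eq_zero; intro b _; rw [hv₁]; simp
    have h0 : ∑ b, star (v₂ (0, b)) * v₁ (0, b) = cc * ∑ b, star (φb l b) * φb l b := by
      rw [Finset.mul_sum]
      apply Finset.sum_congr rfl; intro b _
      rw [hv₁, htop2]
      simp [star_mul', hstarcc]
      ring
    rw [h0, h1, add_zero, hφ1, mul_one]
  -- numeric facts about cc
  have hccne : cc ≠ 0 := by
    rw [hccdef]
    exact Complex.ofReal_ne_zero.mpr hl0.ne'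
  have hcc1 : cc ^ 2 ≠ 1 := by
    intro h
    rw [hccdef] at h
    have h' : (lam l) ^ 2 = (1 : ℝ) := by exact_mod_cast h
    nlinarith
  have hcc1' : (1 : ℂ) - cc ^ 2 ≠ 0 := sub_ne_zero.mpr (Ne.symm hcc1)
  -- linear independence
  have hindep : ∀ a b : ℂ, a • v₁ + b • v₂ = 0 → a = 0 ∧ b = 0 := by
    intro a b h
    have e1 : a + b * cc = 0 := by
      have h' := congrArg (fun w => star v₁ ⬝ᵥ w) h
      simpa [dotProduct_add, dotProduct_smul, g11, g12, smul_eq_mul] using h'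
    have e2 : a * cc + b = 0 := by
      have h' := congrArg (fun w => star v₂ ⬝ᵥ w) h
      simpa [dotProduct_add, dotProduct_smul, g21, g22, smul_eq_mul] using h'
    have h3 : a * (1 - cc ^ 2) = 0 := by linear_combination e1 - cc * e2
    have ha : a = 0 := (mul_eq_zero.mp h3).resolve_right hcc1'
    exact ⟨ha, by linear_combination e2 - cc * ha⟩
  have hli : LinearIndependent ℂ ![v₁, v₂] := LinearIndependent.pair_iff.mpr hindep
  -- membership facts
  have hv₁S : v₁ ∈ S := by
    rw [hS]; exact Submodule.subset_span (by simp)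
  have hv₂S : v₂ ∈ S := by
    rw [hS]; exact Submodule.subset_span (by simp)
  -- dimension
  have hdim : Module.finrank ℂ S = 2 := by
    have hrange : Set.range ![v₁, v₂] = {v₁, v₂} := by
      simp [Matrix.range_cons, Matrix.range_empty]
      exact Set.pair_comm v₂ v₁
    rw [hS, ← hrange, finrank_span_eq_card hli, Fintype.card_fin]
  -- invariance
  have hinv : ∀ x ∈ S, C *ᵥ x ∈ S := by
    intro x hx
    rw [hS] at hx
    induction hx using Submodule.span_induction with
    | mem y hy =>
      simp only [Set.mem_insert_iff, Set.mem_singleton_iff] at hy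
      rcases hy with rfl | rfl
      · rw [hCv₁]
        exact S.sub_mem (S.smul_mem _ hv₂S) hv₁S
      · rw [hCv₂]
        exact S.sub_mem (S.smul_mem _ hv₂S) (S.smul_mem _ hv₁S)
    | zero =>
      rw [Matrix.mulVec_zero]; exact S.zero_mem
    | add y z _ _ hy hz =>
      rw [Matrix.mulVec_add]; exact S.add_mem hy hz
    | smul a y _ hy =>
      rw [Matrix.mulVec_smul]; exact S.smul_mem a hy
  -- unitarity of C
  have hZH : ZIᴴ = ZI := by
    rw [hZId, Matrix.diagonal_conjTranspose]
    have hst : (star fun p : Fin 2 × Fin n => if p.1 = 0 then (1:ℂ) else -1)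
        = fun p : Fin 2 × Fin n => if p.1 = 0 then (1:ℂ) else -1 := by
      funext p
      by_cases h : p.1 = 0 <;> simp [h]
    rw [hst]
  have hZZ : ZI * ZI = 1 := by
    rw [hZId, Matrix.diagonal_mul_diagonal]
    ext p q
    rcases eq_or_ne p q with rfl | hpq
    · by_cases h : p.1 = 0 <;> simp [Matrix.diagonal_apply_eq, Matrix.one_apply_eq, h]
    · simp [Matrix.diagonal_apply_ne _ hpq, Matrix.one_apply_ne hpq]
  have cUU : ∀ X : Matrix (Fin 2 × Fin n) (Fin 2 × Fin n) ℂ, Ut * (Utᴴ * X) = X := fun X => by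
    rw [← Matrix.mul_assoc, hU2, Matrix.one_mul]
  have cUU' : ∀ X : Matrix (Fin 2 × Fin n) (Fin 2 × Fin n) ℂ, Utᴴ * (Ut * X) = X := fun X => by
    rw [← Matrix.mul_assoc, hU1, Matrix.one_mul]
  have cZZ : ∀ X : Matrix (Fin 2 × Fin n) (Fin 2 × Fin n) ℂ, ZI * (ZI * X) = X := fun X => by
    rw [← Matrix.mul_assoc, hZZ, Matrix.one_mul]
  have hCU : Cᴴ * C = 1 := by
    rw [hC]
    simp only [Matrix.conjTranspose_mul, hZH, Matrix.conjTranspose_conjTranspose]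
    simp only [Matrix.mul_assoc]
    rw [cUU, cZZ, cUU', hZZ]
  have hunit : ∀ x y : Fin 2 × Fin n → ℂ,
      star (C *ᵥ x) ⬝ᵥ (C *ᵥ y) = star x ⬝ᵥ y := by
    intro x y
    rw [Matrix.star_mulVec, Matrix.dotProduct_mulVec, Matrix.vecMul_vecMul, hCU,
      Matrix.vecMul_one]
  -- trigonometric identities
  have hcs' : cc ^ 2 + ((Real.sin (θ l / 2) : ℝ) : ℂ) ^ 2 = 1 := by
    have h := Real.sin_sq_add_cos_sq (θ l / 2)
    have h2 : (lam l) ^ 2 + (Real.sin (θ l / 2)) ^ 2 = 1 := by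
      rw [hlamθ l]; linarith
    rw [hccdef]
    exact_mod_cast h2
  set sC : ℂ := ((Real.sin (θ l / 2) : ℝ) : ℂ) with hsCdef
  have hEexp : Complex.exp ((θ l : ℂ) * Complex.I) = (cc + sC * Complex.I) ^ 2 := by
    have h2t : (θ l : ℂ) = ((θ l / 2 : ℝ) : ℂ) + ((θ l / 2 : ℝ) : ℂ) := by
      push_cast; ring
    rw [h2t, add_mul, Complex.exp_add, Complex.exp_mul_I, ← Complex.ofReal_cos,
      ← Complex.ofReal_sin, ← hlamθ l, hccdef, hsCdef]
    ring
  have hFexp : Complex.exp (-(θ l : ℂ) * Complex.I) = (cc - sC * Complex.I) ^ 2 := by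
    have h2t : (-(θ l : ℂ)) = ((-(θ l / 2) : ℝ) : ℂ) + ((-(θ l / 2) : ℝ) : ℂ) := by
      push_cast; ring
    rw [h2t, add_mul, Complex.exp_add, Complex.exp_mul_I, ← Complex.ofReal_cos,
      ← Complex.ofReal_sin, Real.cos_neg, Real.sin_neg, ← hlamθ l, hccdef, hsCdef]
    push_cast
    ring
  have hE1 : 1 + (cc + sC * Complex.I) ^ 2 = 2 * cc * (cc + sC * Complex.I) := by
    linear_combination (-1 : ℂ) * hcs' + sC ^ 2 * Complex.I_sq
  have hF1 : 1 + (cc - sC * Complex.I) ^ 2 = 2 * cc * (cc - sC * Complex.I) := by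
    linear_combination (-1 : ℂ) * hcs' + sC ^ 2 * Complex.I_sq
  -- the eigenvector computation
  have hkey : ∀ z : ℂ, 1 + z ^ 2 = 2 * cc * z →
      C *ᵥ ((2 * cc) • v₁ - (2 * cc * z) • v₂)
        = z ^ 2 • ((2 * cc) • v₁ - (2 * cc * z) • v₂) := by
    intro z hz
    rw [Matrix.mulVec_sub, Matrix.mulVec_smul, Matrix.mulVec_smul, hCv₁, hCv₂]
    match_scalars
    · linear_combination (4 * cc ^ 2 + 2 * cc * z) * hz
    · linear_combination (-2 * cc) * hz
  have hwS : ∀ z : ℂ, (2 * cc) • v₁ - (2 * cc * z) • v₂ ∈ S := fun z =>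
    S.sub_mem (S.smul_mem _ hv₁S) (S.smul_mem _ hv₂S)
  have hwne : ∀ z : ℂ, (2 * cc) • v₁ - (2 * cc * z) • v₂ ≠ 0 := by
    intro z h0
    have h' : (2 * cc) • v₁ + (-(2 * cc * z)) • v₂ = 0 := by
      rw [neg_smul, ← sub_eq_add_neg]; exact h0
    have h2 := (hindep _ _ h').1
    exact hccne (by linear_combination h2 / 2)
  refine ⟨hdim, hinv, fun x _ y _ => hunit x y,
    ⟨(2 * cc) • v₁ - (2 * cc * (cc + sC * Complex.I)) • v₂, hwS _, hwne _, ?_⟩,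
    ⟨(2 * cc) • v₁ - (2 * cc * (cc - sC * Complex.I)) • v₂, hwS _, hwne _, ?_⟩⟩
  · rw [hEexp]
    exact hkey _ hE1
  · rw [hFexp]
    exact hkey _ hF1
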